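/- For the magnetogasdynamic pressure with A₁, B₁ > 0, 1 < γ < 3 and γ ≠ 2, the derivative of m(τ) = (A₁γ(3−γ)τ^(−γ−1) + 2B₁τ^(−3))/(A₁γ(γ+1)τ^(−γ−1) + 6B₁τ^(−3)) equals 8B₁A₁γ(γ−2)²τ^(−γ−5) / (A₁γ(γ+1)τ^(−γ−1) + 6B₁τ^(−3))², and in particular m'(τ) > 0 for all τ > 0. -/
import Mathlib


open Real

theorem stmt_5 (A₁ B₁ γ : ℝ) (hA : 0 < A₁) (hB : 0 < B₁) (hγ1 : 1 < γ) (hγ3 : γ < 3)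
    (hγ2 : γ ≠ 2)
    (m : ℝ → ℝ)
    (hm : ∀ τ : ℝ, 0 < τ →
      m τ = (A₁ * γ * (3 - γ) * τ ^ (-γ - 1) + 2 * B₁ * τ ^ (-3 : ℝ)) /
            (A₁ * γ * (γ + 1) * τ ^ (-γ - 1) + 6 * B₁ * τ ^ (-3 : ℝ))) :
    ∀ τ : ℝ, 0 < τ →
      deriv m τ = 8 * B₁ * A₁ * γ * (γ - 2) ^ 2 * τ ^ (-γ - 5) /
          (A₁ * γ * (γ + 1) * τ ^ (-γ - 1) + 6 * B₁ * τ ^ (-3 : ℝ)) ^ 2 ∧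
      0 < deriv m τ := by
  intro τ hτ
  set f : ℝ → ℝ := fun t =>
    (A₁ * γ * (3 - γ) * t ^ (-γ - 1) + 2 * B₁ * t ^ (-3 : ℝ)) /
      (A₁ * γ * (γ + 1) * t ^ (-γ - 1) + 6 * B₁ * t ^ (-3 : ℝ)) with hf
  have hγ0 : 0 < γ := by linarith
  have hDpos : 0 < A₁ * γ * (γ + 1) * τ ^ (-γ - 1) + 6 * B₁ * τ ^ (-3 : ℝ) := by
    have h1 := Real.rpow_pos_of_pos hτ (-γ - 1)
    have h2 := Real.rpow_pos_of_pos hτ (-3 : ℝ)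
    positivity
  have hDne : A₁ * γ * (γ + 1) * τ ^ (-γ - 1) + 6 * B₁ * τ ^ (-3 : ℝ) ≠ 0 := ne_of_gt hDpos
  have hp1 : HasDerivAt (fun t : ℝ => t ^ (-γ - 1)) ((-γ - 1) * τ ^ (-γ - 1 - 1)) τ :=
    Real.hasDerivAt_rpow_const (Or.inl (ne_of_gt hτ))
  have hp2 : HasDerivAt (fun t : ℝ => t ^ (-3 : ℝ)) ((-3 : ℝ) * τ ^ ((-3 : ℝ) - 1)) τ :=
    Real.hasDerivAt_rpow_const (Or.inl (ne_of_gt hτ))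
  have hN : HasDerivAt (fun t : ℝ => A₁ * γ * (3 - γ) * t ^ (-γ - 1) + 2 * B₁ * t ^ (-3 : ℝ))
      (A₁ * γ * (3 - γ) * ((-γ - 1) * τ ^ (-γ - 1 - 1)) + 2 * B₁ * ((-3 : ℝ) * τ ^ ((-3 : ℝ) - 1))) τ :=
    (hp1.const_mul _).add (hp2.const_mul _)
  have hD : HasDerivAt (fun t : ℝ => A₁ * γ * (γ + 1) * t ^ (-γ - 1) + 6 * B₁ * t ^ (-3 : ℝ))
      (A₁ * γ * (γ + 1) * ((-γ - 1) * τ ^ (-γ - 1 - 1)) + 6 * B₁ * ((-3 : ℝ) * τ ^ ((-3 : ℝ) - 1))) τ :=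
    (hp1.const_mul _).add (hp2.const_mul _)
  have hfd : HasDerivAt f
      (((A₁ * γ * (3 - γ) * ((-γ - 1) * τ ^ (-γ - 1 - 1)) + 2 * B₁ * ((-3 : ℝ) * τ ^ ((-3 : ℝ) - 1))) *
          (A₁ * γ * (γ + 1) * τ ^ (-γ - 1) + 6 * B₁ * τ ^ (-3 : ℝ)) -
        (A₁ * γ * (3 - γ) * τ ^ (-γ - 1) + 2 * B₁ * τ ^ (-3 : ℝ)) *
          (A₁ * γ * (γ + 1) * ((-γ - 1) * τ ^ (-γ - 1 - 1)) + 6 * B₁ * ((-3 : ℝ) * τ ^ ((-3 : ℝ) - 1)))) /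
        (A₁ * γ * (γ + 1) * τ ^ (-γ - 1) + 6 * B₁ * τ ^ (-3 : ℝ)) ^ 2) τ :=
    hN.div hD hDne
  have hmf : m =ᶠ[nhds τ] f := by
    filter_upwards [Ioi_mem_nhds hτ] with t ht
    exact hm t ht
  have hderiv : deriv m τ = deriv f τ := Filter.EventuallyEq.deriv_eq hmf
  set x := τ ^ (-γ - 5) with hx
  set y := τ ^ (γ + 1) with hy
  have e1 : τ ^ (-γ - 1) = x * τ ^ 4 := by
    rw [hx, ← Real.rpow_natCast τ 4, ← Real.rpow_add hτ]
    congr 1; push_cast; ring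
  have e2 : τ ^ (-3 : ℝ) = x * y * τ := by
    have : x * y * τ = τ ^ (-γ - 5 + (γ + 1)) * τ := by rw [hx, hy, ← Real.rpow_add hτ]
    rw [this, ← Real.rpow_add_one (ne_of_gt hτ)]
    congr 1; ring
  have e3 : τ ^ (-γ - 1 - 1) = x * τ ^ 3 := by
    rw [hx, ← Real.rpow_natCast τ 3, ← Real.rpow_add hτ]
    congr 1; push_cast; ring
  have e4 : τ ^ ((-3 : ℝ) - 1) = x * y := by
    rw [hx, hy, ← Real.rpow_add hτ]
    congr 1; ring
  have hxy : x * y * τ ^ 4 = 1 := by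
    rw [hx, hy, ← Real.rpow_natCast τ 4, ← Real.rpow_add hτ, ← Real.rpow_add hτ]
    have : -γ - 5 + (γ + 1) + (4 : ℕ) = (0 : ℝ) := by push_cast; ring
    rw [this, Real.rpow_zero]
  rw [hderiv, hfd.deriv, e1, e2, e3, e4]
  have key : (A₁ * γ * (3 - γ) * ((-γ - 1) * (x * τ ^ 3)) + 2 * B₁ * (-3 * (x * y))) *
        (A₁ * γ * (γ + 1) * (x * τ ^ 4) + 6 * B₁ * (x * y * τ)) -
      (A₁ * γ * (3 - γ) * (x * τ ^ 4) + 2 * B₁ * (x * y * τ)) *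
        (A₁ * γ * (γ + 1) * ((-γ - 1) * (x * τ ^ 3)) + 6 * B₁ * (-3 * (x * y))) =
      8 * B₁ * A₁ * γ * (γ - 2) ^ 2 * x := by
    linear_combination (8 * B₁ * A₁ * γ * (γ - 2) ^ 2 * x) * hxy
  rw [key]
  have hxpos : 0 < x := Real.rpow_pos_of_pos hτ _
  have hypos : 0 < y := Real.rpow_pos_of_pos hτ _
  have hγ2' : γ - 2 ≠ 0 := sub_ne_zero.mpr hγ2
  have h2 : 0 < (γ - 2) ^ 2 := by positivity
  refine ⟨rfl, ?_⟩
  have hD2 : 0 < (A₁ * γ * (γ + 1) * (x * τ ^ 4) + 6 * B₁ * (x * y * τ)) ^ 2 := by positivity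
  apply div_pos _ hD2
  positivity
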